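/- arXiv:2605.24427 — 2 statements merged into one kernel-verified Lean document; each statement's English description precedes it below -/
import Mathlib

section
/- Let A be a C*-algebra and let D be a closed Jordan subalgebra of A. Then for x, y ∈ D, the following are equivalent: (i) x ∘ (y ∘ z) = y ∘ (x ∘ z) for all z ∈ D (x and y operator commute in D); (ii) x*y = y*x in A. -/
/-- The Jordan product `a ∘ b = ½(ab + ba)`. -/
noncomputable def jordanMul {A : Type*} [Ring A] [Module ℝ A] (a b : A) : A :=
  (2 : ℝ)⁻¹ • (a * b + b * a)

/-- Hanche-Olsen's lemma: in a closed Jordan subalgebra `D` of a C*-algebra `A`, two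
elements `x, y ∈ D` operator commute in `D` if and only if they commute in `A`. -/
theorem operatorCommute_iff_commute
    {A : Type*} [NormedRing A] [StarRing A] [CStarRing A] [CompleteSpace A]
    [NormedAlgebra ℂ A] [StarModule ℂ A]
    (D : Set A)
    (hD_sa : ∀ a ∈ D, IsSelfAdjoint a)
    (hD_closed : IsClosed D)
    (hD_zero : (0 : A) ∈ D)
    (hD_add : ∀ a ∈ D, ∀ b ∈ D, a + b ∈ D)
    (hD_smul : ∀ r : ℝ, ∀ a ∈ D, r • a ∈ D)
    (hD_jordan : ∀ a ∈ D, ∀ b ∈ D, jordanMul a b ∈ D)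
    (x y : A) (hx : x ∈ D) (hy : y ∈ D) :
    (∀ z ∈ D, jordanMul x (jordanMul y z) = jordanMul y (jordanMul x z)) ↔
      x * y = y * x := by
  have key : ∀ z : A,
      (x * (y * z + z * y) + (y * z + z * y) * x)
        - (y * (x * z + z * x) + (x * z + z * x) * y)
      = (x * y - y * x) * z - z * (x * y - y * x) := by
    intro z; noncomm_ring
  constructor
  · intro h
    set c : A := x * y - y * x with hc
    -- c commutes with every element of D
    have hcz : ∀ z ∈ D, c * z = z * c := by
      intro z hz
      have h1 := h z hz
      simp only [jordanMul, mul_smul_comm, smul_mul_assoc, ← smul_add, smul_smul] at h1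
      have h2 : (x * (y * z + z * y) + (y * z + z * y) * x)
          = (y * (x * z + z * x) + (x * z + z * x) * y) := by
        have h4 := congrArg (fun u : A => (4 : ℝ) • u) h1
        simpa [smul_smul, show (4 : ℝ) * (2⁻¹ * 2⁻¹) = 1 by norm_num] using h4
      have h3 := key z
      rw [h2, sub_self] at h3
      exact sub_eq_zero.mp h3.symm
    have hcx : Commute c x := hcz x hx
    have hcy : Commute c y := hcz y hy
    -- x y^{k+1} - y^{k+1} x = (k+1) • (c y^k)
    have L1 : ∀ k : ℕ, x * y ^ (k + 1) - y ^ (k + 1) * x = (k + 1) • (c * y ^ k) := by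
      intro k
      induction k with
      | zero => simp [hc]
      | succ k ih =>
          have step1 : x * y ^ (k + 1 + 1) - y ^ (k + 1 + 1) * x
              = (x * y ^ (k + 1) - y ^ (k + 1) * x) * y + y ^ (k + 1) * (x * y - y * x) := by
            rw [pow_succ]; noncomm_ring
          rw [step1, ih, smul_mul_assoc, ← hc, mul_assoc, ← pow_succ,
            ← (hcy.pow_right (k + 1)).eq]
          exact (succ_nsmul _ _).symm
    -- iterated commutator with x
    set d : A → A := fun u => x * u - u * x with hd
    have L2 : ∀ j m : ℕ, j ≤ m →
        d^[j] (y ^ m) = (m.descFactorial j) • (c ^ j * y ^ (m - j)) := by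
      intro j
      induction j with
      | zero => intro m _; simp
      | succ j ih =>
          intro m hjm
          have hj : j ≤ m := le_of_lt hjm
          obtain ⟨k, hk⟩ : ∃ k, m - j = k + 1 := ⟨m - (j + 1), by omega⟩
          have hk2 : m - (j + 1) = k := by omega
          rw [Function.iterate_succ_apply', ih m hj]
          have hdsmul : ∀ (n : ℕ) (v : A), d (n • v) = n • d v := by
            intro n v
            simp only [hd, mul_smul_comm, smul_mul_assoc, smul_sub]
          rw [hdsmul]
          have hxcj : x * c ^ j = c ^ j * x := ((hcx.pow_left j).eq).symm
          have hdv : d (c ^ j * y ^ (m - j)) = c ^ j * (x * y ^ (m - j) - y ^ (m - j) * x) := by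
            show x * (c ^ j * y ^ (m - j)) - (c ^ j * y ^ (m - j)) * x = _
            rw [mul_sub, ← mul_assoc x, hxcj, mul_assoc, mul_assoc]
          rw [hdv, hk, L1 k, mul_smul_comm, smul_smul, ← mul_assoc, ← pow_succ,
            Nat.descFactorial_succ, hk, hk2, Nat.mul_comm]
    -- norm bound on iterates of d
    have L3 : ∀ (n : ℕ) (u : A), ‖d^[n] u‖ ≤ (2 * ‖x‖) ^ n * ‖u‖ := by
      intro n
      induction n with
      | zero => intro u; simp
      | succ n ih =>
          intro u
          rw [Function.iterate_succ_apply]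
          calc ‖d^[n] (d u)‖ ≤ (2 * ‖x‖) ^ n * ‖d u‖ := ih (d u)
            _ ≤ (2 * ‖x‖) ^ n * (2 * ‖x‖ * ‖u‖) := by
                refine mul_le_mul_of_nonneg_left ?_ (by positivity)
                calc ‖x * u - u * x‖ ≤ ‖x * u‖ + ‖u * x‖ := norm_sub_le _ _
                  _ ≤ ‖x‖ * ‖u‖ + ‖u‖ * ‖x‖ := add_le_add (norm_mul_le _ _) (norm_mul_le _ _)
                  _ = 2 * ‖x‖ * ‖u‖ := by ring
            _ = (2 * ‖x‖) ^ (n + 1) * ‖u‖ := by ring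
    -- factorial bound on powers of c
    have Lnorm : ∀ m : ℕ, (m.factorial : ℝ) * ‖c ^ m‖ ≤ (2 * ‖x‖) ^ m * ‖y ^ m‖ := by
      intro m
      have h5 := L2 m m le_rfl
      rw [Nat.descFactorial_self, Nat.sub_self, pow_zero, mul_one] at h5
      have h6 : ‖(m.factorial : ℕ) • (c ^ m)‖ = (m.factorial : ℝ) * ‖c ^ m‖ := by
        rw [← Nat.cast_smul_eq_nsmul ℝ, norm_smul, Real.norm_natCast]
      rw [← h6, ← h5]
      exact L3 m (y ^ m)
    -- c is skew-adjoint and norms of its 2-power powers behave well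
    have hcstar : star c = -c := by
      rw [hc, star_sub, star_mul, star_mul, (hD_sa x hx).star_eq, (hD_sa y hy).star_eq]
      exact (neg_sub _ _).symm
    have hc2sa : IsSelfAdjoint (c ^ 2) := by
      show star (c ^ 2) = c ^ 2
      rw [star_pow, hcstar, neg_sq]
    have hc2norm : ‖c ^ 2‖ = ‖c‖ ^ 2 := by
      have h7 : ‖star c * c‖ = ‖c‖ * ‖c‖ := CStarRing.norm_star_mul_self
      rw [hcstar, neg_mul, norm_neg] at h7
      rw [pow_two, pow_two]
      exact h7
    have Lpow : ∀ n : ℕ, ‖c ^ 2 ^ (n + 1)‖ = ‖c‖ ^ 2 ^ (n + 1) := by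
      intro n
      have h8 : (2 : ℕ) ^ (n + 1) = 2 * 2 ^ n := by ring
      have h9 := hc2sa.nnnorm_pow_two_pow n
      have h10 : ‖(c ^ 2) ^ 2 ^ n‖ = ‖c ^ 2‖ ^ 2 ^ n := by
        have h10' := congrArg ((↑) : NNReal → ℝ) h9
        simpa using h10'
      rw [h8, pow_mul, h10, hc2norm, ← pow_mul]
    -- conclude c = 0
    have hczero : c = 0 := by
      by_contra h0
      have hcpos : (0 : ℝ) < ‖c‖ := norm_pos_iff.mpr h0
      have hbound : ∀ n : ℕ,
          (((2 ^ (n + 1) : ℕ).factorial : ℝ)) * ‖c‖ ^ (2 ^ (n + 1))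
            ≤ (2 * ‖x‖ * ‖y‖) ^ (2 ^ (n + 1)) := by
        intro n
        have hm1 : 0 < 2 ^ (n + 1) := pow_pos (by norm_num) _
        calc (((2 ^ (n + 1) : ℕ).factorial : ℝ)) * ‖c‖ ^ (2 ^ (n + 1))
            = (((2 ^ (n + 1) : ℕ).factorial : ℝ)) * ‖c ^ 2 ^ (n + 1)‖ := by rw [Lpow n]
          _ ≤ (2 * ‖x‖) ^ (2 ^ (n + 1)) * ‖y ^ 2 ^ (n + 1)‖ := Lnorm _
          _ ≤ (2 * ‖x‖) ^ (2 ^ (n + 1)) * ‖y‖ ^ (2 ^ (n + 1)) :=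
              mul_le_mul_of_nonneg_left (norm_pow_le' y hm1) (by positivity)
          _ = (2 * ‖x‖ * ‖y‖) ^ (2 ^ (n + 1)) := by ring
      have ht2 : Filter.Tendsto (fun n : ℕ => 2 ^ (n + 1)) Filter.atTop Filter.atTop := by
        refine Filter.tendsto_atTop_mono (fun n => ?_) Filter.tendsto_id
        exact le_trans (Nat.lt_two_pow_self (n := n)).le (Nat.pow_le_pow_right (by norm_num) (Nat.le_succ n))
      have ht : Filter.Tendsto
          (fun n : ℕ => (2 * ‖x‖ * ‖y‖ / ‖c‖) ^ (2 ^ (n + 1)) / (((2 ^ (n + 1) : ℕ).factorial : ℝ)))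
          Filter.atTop (nhds 0) :=
        (FloorSemiring.tendsto_pow_div_factorial_atTop (2 * ‖x‖ * ‖y‖ / ‖c‖)).comp ht2
      obtain ⟨n, hn⟩ := (ht.eventually_lt_const one_pos).exists
      have hfac : (0 : ℝ) < (((2 ^ (n + 1) : ℕ).factorial : ℝ)) := by
        exact_mod_cast (2 ^ (n + 1) : ℕ).factorial_pos
      have hcm : (0 : ℝ) < ‖c‖ ^ (2 ^ (n + 1)) := pow_pos hcpos _
      have h11 : (2 * ‖x‖ * ‖y‖ / ‖c‖) ^ (2 ^ (n + 1))
          / (((2 ^ (n + 1) : ℕ).factorial : ℝ)) < 1 := hn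
      rw [div_pow, div_div, div_lt_one (by positivity)] at h11
      linarith [hbound n]
    have h12 : x * y - y * x = 0 := by rw [← hc]; exact hczero
    exact sub_eq_zero.mp h12
  · intro hxy z hz
    simp only [jordanMul, mul_smul_comm, smul_mul_assoc, ← smul_add, smul_smul]
    congr 1
    have h3 := key z
    rw [hxy, sub_self] at h3
    have h4 : (x * (y * z + z * y) + (y * z + z * y) * x)
        - (y * (x * z + z * x) + (x * z + z * x) * y) = 0 := by rw [h3]; simp
    exact sub_eq_zero.mp h4
end

section
/- Let A be a C*-algebra and S a nonempty set of self-adjoint elements of A. For self-adjoint x, y ∈ A, write JB(x,y) for the closed Jordan subalgebra of A generated by {x, y}. Suppose that for all s, s′ ∈ S one has s ∘ (s′ ∘ z) = s′ ∘ (s ∘ z) for every z ∈ JB(s,s′). Then s·s′ = s′·s in A for all s, s′ ∈ S, and moreover any two elements x, y of the closed Jordan subalgebra of A generated by S satisfy x·y = y·x in A; in particular that subalgebra is associative and commutative under the Jordan product. -/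
/-- `D` is a closed Jordan subalgebra of `A`: a norm-closed real-linear subspace of the
self-adjoint part of `A` that is closed under the Jordan product. -/
def IsClosedJordanSubalgebra {A : Type*} [NormedRing A] [StarRing A] [Module ℝ A]
    (D : Set A) : Prop :=
  IsClosed D ∧ (∀ a ∈ D, IsSelfAdjoint a) ∧ (0 : A) ∈ D ∧
    (∀ a ∈ D, ∀ b ∈ D, a + b ∈ D) ∧ (∀ r : ℝ, ∀ a ∈ D, r • a ∈ D) ∧
    (∀ a ∈ D, ∀ b ∈ D, jordanMul a b ∈ D)

/-- The closed Jordan subalgebra of `A` generated by a set `T` of self-adjoint elements: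
the smallest closed Jordan subalgebra containing `T`. -/
def jordanClosure {A : Type*} [NormedRing A] [StarRing A] [Module ℝ A]
    (T : Set A) : Set A :=
  ⋂₀ {D : Set A | IsClosedJordanSubalgebra D ∧ T ⊆ D}

section Aux

variable {A : Type*} [NormedRing A] [StarRing A] [NormedAlgebra ℝ A]

lemma mem_jordanClosure_of_mem {T : Set A} {x : A} (hx : x ∈ T) : x ∈ jordanClosure T :=
  fun _D hD => hD.2 hx

lemma fourSmul_jordan (s t z : A) : (4:ℝ) • jordanMul s (jordanMul t z)
    = s*(t*z) + s*(z*t) + t*z*s + z*t*s := by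
  simp only [jordanMul, smul_add, smul_smul, mul_add, add_mul, mul_smul_comm, smul_mul_assoc]
  norm_num
  module

/-- The self-adjoint commutant of a set is a closed Jordan subalgebra. -/
lemma commutant_isClosedJordanSubalgebra [NormedStarGroup A] [StarModule ℝ A] (W : Set A) :
    IsClosedJordanSubalgebra {x : A | IsSelfAdjoint x ∧ ∀ w ∈ W, x * w = w * x} := by
  refine ⟨?_, fun a ha => ha.1, ⟨by simp [IsSelfAdjoint], by simp⟩, ?_, ?_, ?_⟩
  · have : {x : A | IsSelfAdjoint x ∧ ∀ w ∈ W, x * w = w * x}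
        = {x : A | star x = x} ∩ ⋂ w ∈ W, {x : A | x * w = w * x} := by
      ext x
      simp [IsSelfAdjoint, Set.mem_iInter]
    rw [this]
    exact (isClosed_eq continuous_star continuous_id).inter <|
      isClosed_biInter fun w _ => isClosed_eq (continuous_id.mul continuous_const)
        (continuous_const.mul continuous_id)
  · rintro a ⟨ha, ha'⟩ b ⟨hb, hb'⟩
    exact ⟨ha.add hb, fun w hw => by rw [add_mul, mul_add, ha' w hw, hb' w hw]⟩
  · rintro r a ⟨ha, ha'⟩
    refine ⟨?_, fun w hw => by rw [smul_mul_assoc, mul_smul_comm, ha' w hw]⟩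
    rw [IsSelfAdjoint, star_smul, star_trivial, ha.star_eq]
  · rintro a ⟨ha, ha'⟩ b ⟨hb, hb'⟩
    refine ⟨?_, fun w hw => ?_⟩
    · simp only [jordanMul]
      rw [IsSelfAdjoint]
      rw [star_smul, star_add, star_mul, star_mul, ha.star_eq, hb.star_eq]
      simp [add_comm]
    · simp only [jordanMul, smul_mul_assoc, mul_smul_comm]
      congr 1
      have h1 : a * b * w = w * (a * b) := by
        rw [mul_assoc, hb' w hw, ← mul_assoc, ha' w hw, mul_assoc]
      have h2 : b * a * w = w * (b * a) := by
        rw [mul_assoc, ha' w hw, ← mul_assoc, hb' w hw, mul_assoc]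
      rw [add_mul, mul_add, h1, h2]

end Aux

section Kleinecke

variable {A : Type*} [NormedRing A] [CompleteSpace A]
    [NormedAlgebra ℝ A]

/-- Iterated derivation bound. -/
lemma iterate_comm_bound (s : A) (n : ℕ) (x : A) :
    ‖(fun y => s * y - y * s)^[n] x‖ ≤ (2 * ‖s‖) ^ n * ‖x‖ := by
  induction n generalizing x with
  | zero => simp
  | succ n ih =>
    rw [Function.iterate_succ_apply]
    calc ‖(fun y => s * y - y * s)^[n] (s * x - x * s)‖
        ≤ (2 * ‖s‖) ^ n * ‖s * x - x * s‖ := ih _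
      _ ≤ (2 * ‖s‖) ^ n * (2 * ‖s‖ * ‖x‖) := by
          apply mul_le_mul_of_nonneg_left _ (by positivity)
          calc ‖s * x - x * s‖ ≤ ‖s * x‖ + ‖x * s‖ := norm_sub_le _ _
            _ ≤ ‖s‖ * ‖x‖ + ‖x‖ * ‖s‖ := add_le_add (norm_mul_le _ _) (norm_mul_le _ _)
            _ = 2 * ‖s‖ * ‖x‖ := by ring
      _ = (2 * ‖s‖) ^ (n+1) * ‖x‖ := by ring

lemma delta_pow (s t : A) (hct : (s*t - t*s) * t = t * (s*t - t*s)) (n : ℕ) :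
    s * t^(n+1) - t^(n+1) * s = ((n:ℝ)+1) • ((s*t - t*s) * t^n) := by
  induction n with
  | zero => simp
  | succ n ih =>
    have key : s * t^(n+2) - t^(n+2) * s
        = (s * t - t * s) * t^(n+1) + t * (s * t^(n+1) - t^(n+1) * s) := by
      rw [pow_succ' t (n+1)]
      noncomm_ring
    rw [key, ih, mul_smul_comm]
    have htc : t * ((s*t - t*s) * t^n) = (s*t - t*s) * t^(n+1) := by
      rw [← mul_assoc, ← hct, mul_assoc, ← pow_succ']
    rw [htc]
    push_cast
    module

lemma delta_iter_smul (s : A) (r : ℝ) (k : ℕ) (x : A) :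
    (fun y => s * y - y * s)^[k] (r • x) = r • (fun y => s * y - y * s)^[k] x := by
  induction k generalizing x with
  | zero => simp
  | succ k ih =>
    rw [Function.iterate_succ_apply, Function.iterate_succ_apply]
    rw [mul_smul_comm, smul_mul_assoc, ← smul_sub, ih]

lemma delta_iter_mul_left (s c : A) (hc : c * s = s * c) (k : ℕ) (x : A) :
    (fun y => s * y - y * s)^[k] (c * x) = c * (fun y => s * y - y * s)^[k] x := by
  induction k generalizing x with
  | zero => simp
  | succ k ih =>
    rw [Function.iterate_succ_apply, Function.iterate_succ_apply]
    have : s * (c * x) - (c * x) * s = c * (s * x - x * s) := by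
      rw [mul_sub, ← mul_assoc, ← hc, mul_assoc, mul_assoc]
    rw [this, ih]

lemma delta_iter_pow (s t : A) (hct : (s*t - t*s) * t = t * (s*t - t*s))
    (hcs : (s*t - t*s) * s = s * (s*t - t*s)) (k n : ℕ) :
    (fun y => s * y - y * s)^[k] (t^(n+k))
      = (((n+k).descFactorial k : ℝ)) • ((s*t - t*s)^k * t^n) := by
  induction k generalizing n with
  | zero => simp
  | succ k ih =>
    rw [Function.iterate_succ_apply, show n + (k+1) = (n+k) + 1 from rfl,
      delta_pow s t hct (n+k), delta_iter_smul, delta_iter_mul_left s _ hcs, ih,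
      Nat.succ_descFactorial_succ]
    rw [mul_smul_comm, smul_smul]
    rw [← mul_assoc, ← pow_succ']
    congr 1
    push_cast
    ring

lemma factorial_smul_comm_pow (s t : A) (hct : (s*t - t*s) * t = t * (s*t - t*s))
    (hcs : (s*t - t*s) * s = s * (s*t - t*s)) (k : ℕ) :
    ((k.factorial : ℝ)) • ((s*t - t*s)^k) = (fun y => s * y - y * s)^[k] (t^k) := by
  have := delta_iter_pow s t hct hcs k 0
  simp only [Nat.zero_add, zero_add, pow_zero, mul_one, Nat.descFactorial_self] at this
  rw [this]

end Kleinecke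

section Kleinecke2

variable {A : Type*} [NormedRing A] [StarRing A] [CStarRing A] [CompleteSpace A]
    [NormedAlgebra ℂ A] [StarModule ℂ A]

/-- Main Kleinecke-Shirokov style estimate. -/
lemma commutator_eq_zero (s t : A)
    (hs : IsSelfAdjoint s) (ht : IsSelfAdjoint t)
    (hct : (s*t - t*s) * t = t * (s*t - t*s))
    (hcs : (s*t - t*s) * s = s * (s*t - t*s)) :
    s * t = t * s := by
  set c : A := s * t - t * s with hc
  -- `Complex.I • c` is selfadjoint
  have hstar : star c = -c := by
    rw [hc, star_sub, star_mul, star_mul, hs.star_eq, ht.star_eq, neg_sub]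
  have hd : IsSelfAdjoint (Complex.I • c) := by
    rw [IsSelfAdjoint, star_smul, hstar, Complex.star_def, Complex.conj_I, neg_smul, smul_neg,
      neg_neg]
  -- powers 2^k
  have hnorm_pow : ∀ m : ℕ, ‖c‖ ^ (2^m) = ‖c ^ (2^m)‖ := by
    intro m
    have h1 := hd.nnnorm_pow_two_pow m
    have h2 : (Complex.I • c) ^ (2^m) = Complex.I ^ (2^m) • c ^ (2^m) := smul_pow _ _ _
    have h3 : ‖(Complex.I • c) ^ (2^m)‖ = ‖c ^ (2^m)‖ := by
      rw [h2, norm_smul, norm_pow, Complex.norm_I, one_pow, one_mul]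
    have h4 : ‖Complex.I • c‖ = ‖c‖ := by
      rw [norm_smul, Complex.norm_I, one_mul]
    have h1' : ‖(Complex.I • c) ^ (2^m)‖ = ‖Complex.I • c‖ ^ (2^m) := by
      have := congrArg (fun p : NNReal => (p : ℝ)) h1
      simpa using this
    rw [← h3, h1', h4]
  -- the factorial bound
  have hbound : ∀ k : ℕ, 1 ≤ k → (k.factorial : ℝ) * ‖c ^ k‖ ≤ (2 * ‖s‖ * ‖t‖) ^ k := by
    intro k hk
    have h1 : ‖((k.factorial : ℝ)) • (c^k)‖ = (k.factorial : ℝ) * ‖c ^ k‖ := by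
      rw [norm_smul, Real.norm_natCast]
    rw [← h1, factorial_smul_comm_pow s t hct hcs k]
    calc ‖(fun y => s * y - y * s)^[k] (t^k)‖ ≤ (2*‖s‖)^k * ‖t^k‖ := iterate_comm_bound s k _
      _ ≤ (2*‖s‖)^k * ‖t‖^k := by
          apply mul_le_mul_of_nonneg_left (norm_pow_le' t hk) (by positivity)
      _ = (2 * ‖s‖ * ‖t‖) ^ k := by ring
  -- conclude c = 0
  have hc0 : c = 0 := by
    by_contra hne
    have hpos : 0 < ‖c‖ := norm_pos_iff.mpr hne
    set M : ℝ := 2 * ‖s‖ * ‖t‖ with hM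
    have key : ∀ m : ℕ, 1 ≤ (M / ‖c‖) ^ (2^m) / ((2^m).factorial : ℝ) := by
      intro m
      have h1 := hbound (2^m) (Nat.one_le_two_pow)
      rw [← hnorm_pow m] at h1
      rw [le_div_iff₀ (by exact_mod_cast Nat.factorial_pos _), one_mul, div_pow,
        le_div_iff₀ (pow_pos hpos _)]
      exact h1
    have htend : Filter.Tendsto (fun m : ℕ => (M / ‖c‖) ^ (2^m) / (((2^m).factorial : ℝ)))
        Filter.atTop (nhds 0) := by
      apply (FloorSemiring.tendsto_pow_div_factorial_atTop (M / ‖c‖)).comp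
      exact tendsto_pow_atTop_atTop_of_one_lt one_lt_two
    obtain ⟨m, hm⟩ := (htend.eventually_lt_const one_pos).exists
    exact absurd (key m) (not_le.mpr hm)
  exact sub_eq_zero.mp hc0

end Kleinecke2

/-- If `S` is a nonempty set of self-adjoint elements of a C*-algebra `A` such that any
two elements `s, s'` of `S` operator commute within the closed Jordan subalgebra `JB(s,s')`
they generate, then all elements of `S` commute in `A`, and moreover any two elements of the
closed Jordan subalgebra generated by `S` commute in `A`. -/
theorem jordanClosure_commutative
    {A : Type*} [NormedRing A] [StarRing A] [CStarRing A] [CompleteSpace A]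
    [NormedAlgebra ℂ A] [StarModule ℂ A]
    (S : Set A) (hS : S.Nonempty) (hsa : ∀ s ∈ S, IsSelfAdjoint s)
    (hcomm : ∀ s ∈ S, ∀ s' ∈ S, ∀ z ∈ jordanClosure {s, s'},
      jordanMul s (jordanMul s' z) = jordanMul s' (jordanMul s z)) :
    (∀ s ∈ S, ∀ s' ∈ S, s * s' = s' * s) ∧
    (∀ x ∈ jordanClosure S, ∀ y ∈ jordanClosure S, x * y = y * x) := by
  have pair : ∀ s ∈ S, ∀ s' ∈ S, s * s' = s' * s := by
    intro s hs s' hs'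
    have hmem_s : s ∈ jordanClosure {s, s'} := mem_jordanClosure_of_mem (by simp)
    have hmem_t : s' ∈ jordanClosure {s, s'} := mem_jordanClosure_of_mem (by simp)
    have e1 : s*(s'*s') + s*(s'*s') + s'*s'*s + s'*s'*s
        = s'*(s*s') + s'*(s'*s) + s*s'*s' + s'*s*s' := by
      rw [← fourSmul_jordan, ← fourSmul_jordan, hcomm s hs s' hs' s' hmem_t]
    have e2 : s*(s'*s) + s*(s*s') + s'*s*s + s*s'*s
        = s'*(s*s) + s'*(s*s) + s*s*s' + s*s*s' := by
      rw [← fourSmul_jordan, ← fourSmul_jordan, hcomm s hs s' hs' s hmem_s]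
    have hct : (s*s' - s'*s) * s' = s' * (s*s' - s'*s) := by
      have h0 : (s*s' - s'*s) * s' - s' * (s*s' - s'*s)
          = (s*(s'*s') + s*(s'*s') + s'*s'*s + s'*s'*s)
            - (s'*(s*s') + s'*(s'*s) + s*s'*s' + s'*s*s') := by noncomm_ring
      rw [e1, sub_self] at h0
      exact sub_eq_zero.mp h0
    have hcs : (s*s' - s'*s) * s = s * (s*s' - s'*s) := by
      have h0 : (s*s' - s'*s) * s - s * (s*s' - s'*s)
          = (s*(s'*s) + s*(s*s') + s'*s*s + s*s'*s)
            - (s'*(s*s) + s'*(s*s) + s*s*s' + s*s*s') := by noncomm_ring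
      rw [e2, sub_self] at h0
      exact sub_eq_zero.mp h0
    exact commutator_eq_zero s s' (hsa s hs) (hsa s' hs') hct hcs
  have hT1 := commutant_isClosedJordanSubalgebra (A := A) S
  have hST1 : S ⊆ {x : A | IsSelfAdjoint x ∧ ∀ w ∈ S, x * w = w * x} :=
    fun s hs => ⟨hsa s hs, fun w hw => pair s hs w hw⟩
  have hsub1 : jordanClosure S ⊆ {x : A | IsSelfAdjoint x ∧ ∀ w ∈ S, x * w = w * x} :=
    fun x hx => Set.mem_sInter.mp hx _ ⟨hT1, hST1⟩
  have hT2 := commutant_isClosedJordanSubalgebra (A := A) (jordanClosure S)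
  have hST2 : S ⊆ {x : A | IsSelfAdjoint x ∧ ∀ w ∈ jordanClosure S, x * w = w * x} :=
    fun s hs => ⟨hsa s hs, fun w hw => ((hsub1 hw).2 s hs).symm⟩
  have hsub2 : jordanClosure S
      ⊆ {x : A | IsSelfAdjoint x ∧ ∀ w ∈ jordanClosure S, x * w = w * x} :=
    fun x hx => Set.mem_sInter.mp hx _ ⟨hT2, hST2⟩
  exact ⟨pair, fun x hx y hy => (hsub2 hx).2 y hy⟩
end
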